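/- ε-Bayesian₀ differential privacy implies ε-differential privacy: if a randomized algorithm A : (Fin n → D) → PMF O satisfies, for every population distribution P : PMF (Fin n → D), every index i : Fin n, all values d, d' : D with Pr[D_i = d] > 0 and Pr[D_i = d'] > 0, and every output o : O, the bound Pr[O = o ∣ D_i = d] ≤ ENNReal.ofReal (Real.exp ε) * Pr[O = o ∣ D_i = d'], then A is ε-differentially private. -/

import Mathlib

theorem bayesian0_dp_implies_dp
    {n : ℕ} {D O : Type} [Fintype D] [DecidableEq D] [Nonempty D] [Fintype O] [Nonempty O]
    (A : (Fin n → D) → PMF O) (ε : ℝ)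
    (hbayes : ∀ (P : PMF (Fin n → D)) (i : Fin n) (d d' : D) (o : O),
        (∑ x ∈ Finset.univ.filter (fun x : Fin n → D => x i = d), P x) > 0 →
        (∑ x ∈ Finset.univ.filter (fun x : Fin n → D => x i = d'), P x) > 0 →
        (∑ x ∈ Finset.univ.filter (fun x : Fin n → D => x i = d), P x * A x o) /
            (∑ x ∈ Finset.univ.filter (fun x : Fin n → D => x i = d), P x)
          ≤ ENNReal.ofReal (Real.exp ε) *
            ((∑ x ∈ Finset.univ.filter (fun x : Fin n → D => x i = d'), P x * A x o) /
              (∑ x ∈ Finset.univ.filter (fun x : Fin n → D => x i = d'), P x))) :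
    ∀ (x : Fin n → D) (i : Fin n) (d' : D) (o : O),
      A x o ≤ ENNReal.ofReal (Real.exp ε) * A (Function.update x i d') o := by
  intro x i d' o
  by_cases h : x i = d'
  · subst h
    rw [Function.update_eq_self]
    have key := hbayes (PMF.pure x) i (x i) (x i) o
    have hsum : (∑ y ∈ Finset.univ.filter (fun y : Fin n → D => y i = x i),
        (PMF.pure x) y) = 1 := by
      rw [Finset.sum_filter]
      have hc : ∀ y : Fin n → D,
          (if y i = x i then (PMF.pure x) y else 0) = if y = x then 1 else 0 := by
        intro y; by_cases hy : y = x <;> simp [hy, PMF.pure_apply]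
      rw [Finset.sum_congr rfl fun y _ => hc y, Finset.sum_ite_eq']
      simp
    have hnum : (∑ y ∈ Finset.univ.filter (fun y : Fin n → D => y i = x i),
        (PMF.pure x) y * A y o) = A x o := by
      rw [Finset.sum_filter]
      have hc : ∀ y : Fin n → D,
          (if y i = x i then (PMF.pure x) y * A y o else 0) = if y = x then A x o else 0 := by
        intro y; by_cases hy : y = x <;> simp [hy, PMF.pure_apply]
      rw [Finset.sum_congr rfl fun y _ => hc y, Finset.sum_ite_eq']
      simp
    rw [hsum, hnum] at key
    simpa using key zero_lt_one zero_lt_one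
  · set x' := Function.update x i d' with hx'
    have hxx' : x ≠ x' := by
      intro hEq
      apply h
      have := congrFun hEq i
      simpa [hx'] using this
    have hx'i : x' i = d' := by simp [hx']
    -- build P
    set f : (Fin n → D) → ENNReal := fun y =>
      (if y = x then 2⁻¹ else 0) + (if y = x' then 2⁻¹ else 0) with hf
    have hfsum : ∑ y, f y = 1 := by
      rw [hf]
      simp only [Finset.sum_add_distrib, Finset.sum_ite_eq', Finset.mem_univ, if_true]
      rw [← ENNReal.inv_two_add_inv_two]
    set P : PMF (Fin n → D) := PMF.ofFintype f (by rw [hfsum]) with hP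
    have hPapp : ∀ y, P y = f y := fun y => by simp [hP, PMF.ofFintype_apply]
    have hsum1 : (∑ y ∈ Finset.univ.filter (fun y : Fin n → D => y i = x i), P y) = 2⁻¹ := by
      simp only [hPapp, hf]
      rw [Finset.sum_add_distrib]
      rw [Finset.sum_ite_eq', Finset.sum_ite_eq']
      simp [Finset.mem_filter, hx'i, h, Ne.symm h]
    have hsum2 : (∑ y ∈ Finset.univ.filter (fun y : Fin n → D => y i = d'), P y) = 2⁻¹ := by
      simp only [hPapp, hf]
      rw [Finset.sum_add_distrib]
      rw [Finset.sum_ite_eq', Finset.sum_ite_eq']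
      simp [Finset.mem_filter, h, hx'i]
    have hnum1 : (∑ y ∈ Finset.univ.filter (fun y : Fin n → D => y i = x i), P y * A y o)
        = 2⁻¹ * A x o := by
      simp only [hPapp, hf, add_mul, ite_mul, zero_mul]
      rw [Finset.sum_add_distrib]
      rw [Finset.sum_ite_eq', Finset.sum_ite_eq']
      simp [Finset.mem_filter, hx'i, h, Ne.symm h]
    have hnum2 : (∑ y ∈ Finset.univ.filter (fun y : Fin n → D => y i = d'), P y * A y o)
        = 2⁻¹ * A x' o := by
      simp only [hPapp, hf, add_mul, ite_mul, zero_mul]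
      rw [Finset.sum_add_distrib]
      rw [Finset.sum_ite_eq', Finset.sum_ite_eq']
      simp [Finset.mem_filter, h, hx'i]
    have key := hbayes P i (x i) d' o
    rw [hsum1, hsum2, hnum1, hnum2] at key
    have h2 : (2⁻¹ : ENNReal) ≠ 0 := by norm_num
    have h2' : (2⁻¹ : ENNReal) ≠ ⊤ := by norm_num
    rw [mul_div_assoc, mul_div_assoc, ENNReal.mul_div_cancel h2 h2',
      ENNReal.mul_div_cancel h2 h2'] at key
    exact key (by norm_num) (by norm_num)
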